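/- The zeroth Fitting ideal of a finitely presented module over a commutative ring does not depend on the choice of finite presentation. -/

import Mathlib

open Matrix

/-- The ideal generated by determinants of square matrices all of whose rows lie in `K`. -/
def kdet {R : Type*} [CommRing R] (n : Type*) [Fintype n] [DecidableEq n]
    (K : Submodule R (n → R)) : Ideal R :=
  Ideal.span { d : R | ∃ N : Matrix n n R, (∀ i, N i ∈ K) ∧ d = N.det }

def fitt0 {R : Type*} [CommRing R] {q p : ℕ} (A : Matrix (Fin q) (Fin p) R) : Ideal R :=
  Ideal.span { d : R | ∃ r : Fin p ↪ Fin q, d = (A.submatrix r id).det }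

lemma det_mem_kdet {R : Type*} [CommRing R] {n : Type*} [Fintype n] [DecidableEq n]
    {K : Submodule R (n → R)} (N : Matrix n n R) (h : ∀ i, N i ∈ K) : N.det ∈ kdet n K :=
  Ideal.subset_span ⟨N, h, rfl⟩

lemma det_mem_fitt0 {R : Type*} [CommRing R] {q p : ℕ} (A : Matrix (Fin q) (Fin p) R)
    (N : Matrix (Fin p) (Fin p) R) (h : ∀ i, N i ∈ Submodule.span R (Set.range A)) :
    N.det ∈ fitt0 A := by
  have h' : ∀ i, ∃ c : Fin q → R, ∑ j, c j • A j = N i := by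
    intro i
    exact (Submodule.mem_span_range_iff_exists_fun R).1 (h i)
  choose c hc using h'
  have hN : N = fun i => ∑ j, c i j • A j := by
    funext i; exact (hc i).symm
  have : N.det = ∑ r : Fin p → Fin q,
      (detRowAlternating : (Fin p → R) [⋀^Fin p]→ₗ[R] R) fun i => c i (r i) • A (r i) := by
    rw [show N.det = (detRowAlternating : (Fin p → R) [⋀^Fin p]→ₗ[R] R) N from rfl, hN]
    exact (detRowAlternating : (Fin p → R) [⋀^Fin p]→ₗ[R] R).toMultilinearMap.map_sum
      (fun i j => c i j • A j)
  rw [this]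
  apply Ideal.sum_mem
  intro r _
  have hsmul : ((detRowAlternating : (Fin p → R) [⋀^Fin p]→ₗ[R] R) fun i => c i (r i) • A (r i))
      = (∏ i, c i (r i)) • (detRowAlternating : (Fin p → R) [⋀^Fin p]→ₗ[R] R) (fun i => A (r i)) :=
    (detRowAlternating : (Fin p → R) [⋀^Fin p]→ₗ[R] R).toMultilinearMap.map_smul_univ
      (fun i => c i (r i)) (fun i => A (r i))
  rw [hsmul, smul_eq_mul]
  by_cases hr : Function.Injective r
  · exact Ideal.mul_mem_left _ _ (Ideal.subset_span ⟨⟨r, hr⟩, rfl⟩)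
  · rw [Function.not_injective_iff] at hr
    obtain ⟨i, j, hij, hne⟩ := hr
    rw [(detRowAlternating : (Fin p → R) [⋀^Fin p]→ₗ[R] R).map_eq_zero_of_eq
      (fun i => A (r i)) (congrArg A hij) hne]
    simp

lemma fitt0_eq_kdet {R : Type*} [CommRing R] {q p : ℕ} (A : Matrix (Fin q) (Fin p) R) :
    fitt0 A = kdet (Fin p) (Submodule.span R (Set.range A)) := by
  apply le_antisymm
  · rw [fitt0, Ideal.span_le]
    rintro d ⟨r, rfl⟩
    exact det_mem_kdet _ (fun i => Submodule.subset_span ⟨r i, rfl⟩)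
  · rw [kdet, Ideal.span_le]
    rintro d ⟨N, hN, rfl⟩
    exact det_mem_fitt0 A N hN

/-- If every row of a square matrix over `n ⊕ n'` has its left part in `K`, then its
determinant is in `kdet n K`. -/
lemma det_mem_kdet_left {R : Type*} [CommRing R] {n n' : Type*} [Fintype n] [Fintype n']
    [DecidableEq n] [DecidableEq n'] (K : Submodule R (n → R))
    (S : Matrix (n ⊕ n') (n ⊕ n') R)
    (h : ∀ i, (fun k => S i (Sum.inl k)) ∈ K) : S.det ∈ kdet n K := by
  classical
  set D := (detRowAlternating : ((n ⊕ n') → R) [⋀^(n ⊕ n')]→ₗ[R] R) with hD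
  set g : (n ⊕ n') → Option n' → ((n ⊕ n') → R) := fun i o =>
    o.elim (Sum.elim (fun k => S i (Sum.inl k)) 0)
      (fun j => S i (Sum.inr j) • (Pi.single (Sum.inr j) 1 : (n ⊕ n') → R)) with hg
  have hrow : ∀ i, S i = ∑ o : Option n', g i o := by
    intro i
    funext x
    rw [Finset.sum_apply]
    cases x with
    | inl k => simp [hg, Pi.single_apply]
    | inr j => simp [hg, Pi.single_apply]
  have hdet : S.det = ∑ r : (n ⊕ n') → Option n', D (fun i => g i (r i)) := by
    rw [show S.det = D S from rfl, show S = fun i => ∑ o : Option n', g i o from funext hrow]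
    exact D.toMultilinearMap.map_sum g
  rw [hdet]
  apply Ideal.sum_mem
  intro r _
  set c : (n ⊕ n') → R := fun i => (r i).elim 1 (fun j => S i (Sum.inr j)) with hc
  set v : (n ⊕ n') → ((n ⊕ n') → R) := fun i =>
    (r i).elim (Sum.elim (fun k => S i (Sum.inl k)) 0)
      (fun j => (Pi.single (Sum.inr j) 1 : (n ⊕ n') → R)) with hv
  have hgv : (fun i => g i (r i)) = fun i => c i • v i := by
    funext i
    cases hri : r i with
    | none => simp [hg, hc, hv, hri]
    | some j => simp [hg, hc, hv, hri]
  have hsmul : D (fun i => g i (r i)) = (∏ i, c i) • D v := by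
    rw [hgv]; exact D.toMultilinearMap.map_smul_univ c v
  rw [hsmul, smul_eq_mul]
  apply Ideal.mul_mem_left
  by_cases hinj : ∀ i i' j, r i = some j → r i' = some j → i = i'
  · by_cases hsur : ∀ j, ∃ i, r i = some j
    · -- main case: the rows hitting basis vectors exhaust `n'`; permute into block form
      choose ψ hψ using hsur
      set p : (n ⊕ n') → Prop := fun i => r i = none with hp
      have hψcompl : ∀ j, ¬ p (ψ j) := fun j => by simp [hp, hψ j]
      have ψbij : Function.Bijective (fun j => (⟨ψ j, hψcompl j⟩ : {i // ¬ p i})) := by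
        constructor
        · intro j j' hjj'
          have h2 : ψ j = ψ j' := congrArg Subtype.val hjj'
          have := hψ j
          rw [h2, hψ j'] at this
          exact (Option.some_injective _ this).symm
        · rintro ⟨i, hi⟩
          cases hri : r i with
          | none => exact absurd hri hi
          | some j => exact ⟨j, Subtype.ext (hinj _ _ _ (hψ j) hri)⟩
      set ψe : n' ≃ {i // ¬ p i} := Equiv.ofBijective _ ψbij with hψe
      have hcard : Fintype.card n = Fintype.card {i // p i} := by
        have h1 : Fintype.card ({i // p i} ⊕ {i // ¬ p i}) = Fintype.card (n ⊕ n') :=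
          Fintype.card_congr (Equiv.sumCompl p)
        rw [Fintype.card_sum, Fintype.card_sum, ← Fintype.card_congr ψe] at h1
        omega
      set e : n ≃ {i // p i} := Fintype.equivOfCardEq hcard with he
      set ρ : (n ⊕ n') ≃ (n ⊕ n') := (Equiv.sumCongr e ψe).trans (Equiv.sumCompl p) with hρ
      set U : Matrix n n R := Matrix.of fun i k => S ((e i) : n ⊕ n') (Sum.inl k) with hU
      have hρl : ∀ i : n, ρ (Sum.inl i) = (e i : n ⊕ n') := fun i => rfl
      have hρr : ∀ j : n', ρ (Sum.inr j) = ψ j := fun j => rfl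
      have hblock : (Matrix.of v).submatrix ρ id = Matrix.fromBlocks U 0 0 1 := by
        ext i x
        cases i with
        | inl i =>
          have hpe : r ((e i : {i // p i}) : n ⊕ n') = none := (e i).2
          cases x with
          | inl k => simp [Matrix.submatrix, hρl, hv, hpe, hU]
          | inr j => simp [Matrix.submatrix, hρl, hv, hpe]
        | inr j =>
          have hs : r (ψ j) = some j := hψ j
          cases x with
          | inl k => simp [Matrix.submatrix, hρr, hv, hs, Pi.single_apply]
          | inr j' =>
            simp [Matrix.submatrix, hρr, hv, hs, Pi.single_apply, Matrix.one_apply, eq_comm]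
      have hdp : ((Matrix.of v).submatrix ρ id).det
          = Equiv.Perm.sign ρ * (Matrix.of v).det := Matrix.det_permute ρ _
      rw [hblock, Matrix.det_fromBlocks_zero₂₁, Matrix.det_one, mul_one] at hdp
      have hUK : U.det ∈ kdet n K :=
        det_mem_kdet U (fun i => h ((e i : {i // p i}) : n ⊕ n'))
      have hDv : D v = (Matrix.of v).det := rfl
      rw [hDv]
      rcases Int.units_eq_one_or (Equiv.Perm.sign ρ) with hsg | hsg <;> rw [hsg] at hdp
      · simp only [Units.val_one, Int.cast_one, one_mul] at hdp
        rw [← hdp]; exact hUK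
      · simp only [Units.val_neg, Units.val_one, Int.cast_neg, Int.cast_one, neg_one_mul] at hdp
        have h2 : (Matrix.of v).det = -U.det := by rw [hdp, neg_neg]
        rw [h2]; exact neg_mem hUK
    · push_neg at hsur
      obtain ⟨j₀, hj₀⟩ := hsur
      have hz : D v = 0 := by
        have : (Matrix.of v).det = 0 := by
          apply Matrix.det_eq_zero_of_column_eq_zero (Sum.inr j₀)
          intro i
          cases hri : r i with
          | none => simp [hv, hri]
          | some j =>
            have : j ≠ j₀ := fun hjj => hj₀ i (by rw [hri, hjj])
            simp [hv, hri, Pi.single_apply, this]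
        exact this
      rw [hz]; exact Submodule.zero_mem _
  · push_neg at hinj
    obtain ⟨i, i', j, hi, hi', hne⟩ := hinj
    have hvv : v i = v i' := by simp [hv, hi, hi']
    rw [D.map_eq_zero_of_eq v hvv hne]
    exact Submodule.zero_mem _

/-- The combined presentation map on `R^(n ⊕ n')`. -/
def comb {R M : Type*} [CommRing R] [AddCommGroup M] [Module R M] {n n' : Type*}
    (π : (n → R) →ₗ[R] M) (π' : (n' → R) →ₗ[R] M) : ((n ⊕ n') → R) →ₗ[R] M :=
  π.comp (LinearMap.funLeft R R Sum.inl) + π'.comp (LinearMap.funLeft R R Sum.inr)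

lemma kdet_comb {R M : Type*} [CommRing R] [AddCommGroup M] [Module R M]
    {n n' : Type*} [Fintype n] [Fintype n'] [DecidableEq n] [DecidableEq n']
    (π : (n → R) →ₗ[R] M) (π' : (n' → R) →ₗ[R] M) (hs : Function.Surjective π) :
    kdet (n ⊕ n') (LinearMap.ker (comb π π')) = kdet n (LinearMap.ker π) := by
  classical
  obtain ⟨θ, hθ⟩ := Module.projective_lifting_property π π' hs
  have hθ' : ∀ w : n' → R, π (θ w) = π' w := fun w => LinearMap.congr_fun hθ w
  have hmem : ∀ f : (n ⊕ n') → R, f ∈ LinearMap.ker (comb π π') ↔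
      (f ∘ Sum.inl) + θ (f ∘ Sum.inr) ∈ LinearMap.ker π := by
    intro f
    have hc : comb π π' f = π ((f ∘ Sum.inl) + θ (f ∘ Sum.inr)) := by
      rw [map_add, hθ' (f ∘ Sum.inr)]; rfl
    rw [LinearMap.mem_ker, LinearMap.mem_ker, hc]
  set Θ : Matrix n' n R := Matrix.of fun j => θ (Pi.single j 1) with hΘ
  have hΘv : ∀ w : n' → R, (fun k => ∑ j, w j * Θ j k) = θ w := by
    intro w
    have h1 : θ w = ∑ j, w j • θ (Pi.single j 1) := by
      conv_lhs => rw [← Finset.univ_sum_single w]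
      rw [map_sum]
      refine Finset.sum_congr rfl fun j _ => ?_
      rw [← LinearMap.map_smul]
      congr 1
      funext x
      simp [Pi.single_apply]
    rw [h1]
    funext k
    rw [Finset.sum_apply]
    simp [hΘ]
  apply le_antisymm
  · rw [kdet, Ideal.span_le]
    rintro d ⟨B, hB, rfl⟩
    set E : Matrix (n ⊕ n') (n ⊕ n') R := Matrix.fromBlocks 1 0 Θ 1 with hE
    have hdetE : E.det = 1 := by
      rw [hE, Matrix.det_fromBlocks_zero₁₂, Matrix.det_one, Matrix.det_one, one_mul]
    have hdet : (B * E).det = B.det := by rw [Matrix.det_mul, hdetE, mul_one]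
    rw [← hdet]
    apply det_mem_kdet_left
    intro i
    have hrow : (fun k => (B * E) i (Sum.inl k)) = (B i ∘ Sum.inl) + θ (B i ∘ Sum.inr) := by
      funext k
      rw [show (B * E) i (Sum.inl k) = ∑ y, B i y * E y (Sum.inl k) from Matrix.mul_apply,
        Fintype.sum_sum_type]
      have e1 : ∑ k' : n, B i (Sum.inl k') * E (Sum.inl k') (Sum.inl k) = B i (Sum.inl k) := by
        simp [hE, Matrix.one_apply]
      have e2 : ∀ j : n', E (Sum.inr j) (Sum.inl k) = Θ j k := fun j => rfl
      rw [e1]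
      simp only [e2]
      have := congrFun (hΘv (B i ∘ Sum.inr)) k
      rw [Pi.add_apply, ← this]
      rfl
    rw [hrow]
    exact (hmem (B i)).1 (hB i)
  · rw [kdet, Ideal.span_le]
    rintro d ⟨N, hN, rfl⟩
    set B : Matrix (n ⊕ n') (n ⊕ n') R := Matrix.fromBlocks N 0 Θ (-1) with hB
    have hBrows : ∀ i, B i ∈ LinearMap.ker (comb π π') := by
      intro i
      rw [hmem]
      cases i with
      | inl i =>
        have h1 : B (Sum.inl i) ∘ Sum.inl = N i := by funext k; simp [hB]
        have h2 : B (Sum.inl i) ∘ Sum.inr = 0 := by funext j; simp [hB]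
        rw [h1, h2, map_zero, add_zero]
        exact hN i
      | inr j =>
        have h1 : B (Sum.inr j) ∘ Sum.inl = θ (Pi.single j 1) := by
          funext k; simp [hB, hΘ]
        have h2 : B (Sum.inr j) ∘ Sum.inr = -(Pi.single j 1) := by
          funext j'
          simp [hB, Matrix.one_apply, Pi.single_apply, eq_comm]
        rw [h1, h2, map_neg, add_neg_cancel]
        exact Submodule.zero_mem _
    have hdetB : B.det = N.det * (-1 : Matrix n' n' R).det := by
      rw [hB, Matrix.det_fromBlocks_zero₁₂]
    have hdm : (-1 : Matrix n' n' R).det = (-1 : R) ^ Fintype.card n' := by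
      rw [show (-1 : Matrix n' n' R) = -(1 : Matrix n' n' R) from rfl, Matrix.det_neg,
        Matrix.det_one, mul_one]
    have hNB : N.det = (-1 : R) ^ Fintype.card n' * B.det := by
      rw [hdetB, hdm, mul_comm (N.det) _, ← mul_assoc, ← pow_add,
        Even.neg_one_pow ⟨Fintype.card n', rfl⟩, one_mul]
    rw [hNB]
    exact Ideal.mul_mem_left _ _ (det_mem_kdet B hBrows)

lemma kdet_reindex {R : Type*} [CommRing R] {n m : Type*} [Fintype n] [Fintype m]
    [DecidableEq n] [DecidableEq m] (e : n ≃ m) (K : Submodule R (n → R))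
    (K' : Submodule R (m → R)) (h : ∀ v : m → R, v ∈ K' ↔ (v ∘ e) ∈ K) :
    kdet m K' = kdet n K := by
  apply le_antisymm
  · rw [kdet, Ideal.span_le]
    rintro d ⟨N, hN, rfl⟩
    rw [← Matrix.det_submatrix_equiv_self e N]
    apply det_mem_kdet
    intro i
    have hr : (N.submatrix e e) i = (N (e i)) ∘ e := rfl
    rw [hr]
    exact (h (N (e i))).1 (hN (e i))
  · rw [kdet, Ideal.span_le]
    rintro d ⟨N, hN, rfl⟩
    rw [← Matrix.det_submatrix_equiv_self e.symm N]
    apply det_mem_kdet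
    intro i
    rw [h]
    have hr : ((N.submatrix e.symm e.symm) i) ∘ e = N (e.symm i) := by
      funext k; simp
    rw [hr]
    exact hN _

/-- The zeroth Fitting ideal does not depend on the choice of finite presentation. -/
theorem stmt2 (R : Type*) [CommRing R]
    (M : Type*) [AddCommGroup M] [Module R M]
    (q₁ p₁ q₂ p₂ : ℕ)
    (A₁ : Matrix (Fin q₁) (Fin p₁) R) (π₁ : (Fin p₁ → R) →ₗ[R] M)
    (hsurj₁ : Function.Surjective π₁)
    (hker₁ : LinearMap.ker π₁ = LinearMap.range A₁.vecMulLinear)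
    (A₂ : Matrix (Fin q₂) (Fin p₂) R) (π₂ : (Fin p₂ → R) →ₗ[R] M)
    (hsurj₂ : Function.Surjective π₂)
    (hker₂ : LinearMap.ker π₂ = LinearMap.range A₂.vecMulLinear) :
    fitt0 A₁ = fitt0 A₂ := by
  have k1 : Submodule.span R (Set.range A₁) = LinearMap.ker π₁ := by
    rw [hker₁, range_vecMulLinear]; rfl
  have k2 : Submodule.span R (Set.range A₂) = LinearMap.ker π₂ := by
    rw [hker₂, range_vecMulLinear]; rfl
  rw [fitt0_eq_kdet, fitt0_eq_kdet, k1, k2,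
    ← kdet_comb π₁ π₂ hsurj₁, ← kdet_comb π₂ π₁ hsurj₂]
  refine (kdet_reindex (Equiv.sumComm (Fin p₁) (Fin p₂)) _ _ ?_).symm
  intro v
  have hc : (comb π₁ π₂) (v ∘ ⇑(Equiv.sumComm (Fin p₁) (Fin p₂))) = (comb π₂ π₁) v := by
    have h1 : (comb π₁ π₂) (v ∘ ⇑(Equiv.sumComm (Fin p₁) (Fin p₂)))
        = π₁ (v ∘ Sum.inr) + π₂ (v ∘ Sum.inl) := rfl
    have h2 : (comb π₂ π₁) v = π₂ (v ∘ Sum.inl) + π₁ (v ∘ Sum.inr) := rfl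
    rw [h1, h2, add_comm]
  rw [LinearMap.mem_ker, LinearMap.mem_ker, hc]
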